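/- (Equality part of Theorem 1.1/3.1.) Let n ≥ 1 and let F : 𝒦ⁿ → [0,∞) be positively homogeneous, increasing and concave, and assume in addition that F is strictly increasing on 𝒦ⁿₒ. Let p ∈ (1,∞), K, L ∈ 𝒦ⁿₒ and α ∈ (0,1). Then F((1-α)·_p K +_p α·_p L)^p = (1-α)F(K)^p + αF(L)^p holds if and only if K and L are dilates. -/

import Mathlib

open scoped Pointwise RealInnerProductSpace

/-- A convex body in `ℝⁿ`: a compact convex set with nonempty interior. -/
def IsConvexBody {n : ℕ} (K : Set (EuclideanSpace ℝ (Fin n))) : Prop :=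
  IsCompact K ∧ Convex ℝ K ∧ (interior K).Nonempty

/-- A convex body containing the origin in its interior. -/
def IsConvexBodyO {n : ℕ} (K : Set (EuclideanSpace ℝ (Fin n))) : Prop :=
  IsCompact K ∧ Convex ℝ K ∧ (0 : EuclideanSpace ℝ (Fin n)) ∈ interior K

/-- The support function of a set: `h_K(u) = sup { ⟪x, u⟫ : x ∈ K }`. -/
noncomputable def supp {n : ℕ} (K : Set (EuclideanSpace ℝ (Fin n)))
    (u : EuclideanSpace ℝ (Fin n)) : ℝ :=
  sSup ((fun x => ⟪x, u⟫) '' K)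

open Set

variable {n : ℕ} {K L M : Set (EuclideanSpace ℝ (Fin n))} {u : EuclideanSpace ℝ (Fin n)}

lemma inner_cont (u : EuclideanSpace ℝ (Fin n)) :
    Continuous (fun x : EuclideanSpace ℝ (Fin n) => ⟪x, u⟫) :=
  continuous_id.inner continuous_const

lemma supp_isGreatest (hK : IsCompact K) (hne : K.Nonempty) (u : EuclideanSpace ℝ (Fin n)) :
    IsGreatest ((fun x => ⟪x, u⟫) '' K) (supp K u) := by
  obtain ⟨x, hxK, hx⟩ := hK.exists_isMaxOn hne ((inner_cont u).continuousOn)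
  have hg : IsGreatest ((fun x => ⟪x, u⟫) '' K) ⟪x, u⟫ := by
    constructor
    · exact ⟨x, hxK, rfl⟩
    · rintro y ⟨z, hz, rfl⟩; exact hx hz
  rw [supp, hg.csSup_eq]
  exact hg

lemma inner_le_supp (hK : IsCompact K) (hne : K.Nonempty) {x : EuclideanSpace ℝ (Fin n)}
    (hx : x ∈ K) (u : EuclideanSpace ℝ (Fin n)) : ⟪x, u⟫ ≤ supp K u :=
  (supp_isGreatest hK hne u).2 ⟨x, hx, rfl⟩

lemma supp_le (hne : K.Nonempty) {c : ℝ} (h : ∀ x ∈ K, ⟪x, u⟫ ≤ c) : supp K u ≤ c := by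
  apply csSup_le (hne.image _)
  rintro y ⟨z, hz, rfl⟩; exact h z hz

lemma supp_smul (hK : IsCompact K) (hne : K.Nonempty) {c : ℝ} (hc : 0 ≤ c)
    (u : EuclideanSpace ℝ (Fin n)) : supp (c • K) u = c * supp K u := by
  have hg := supp_isGreatest hK hne u
  have : IsGreatest ((fun x => ⟪x, u⟫) '' (c • K)) (c * supp K u) := by
    constructor
    · obtain ⟨x, hxK, hx⟩ := hg.1
      exact ⟨c • x, smul_mem_smul_set hxK, by simp only [real_inner_smul_left]; rw [show inner ℝ x u = supp K u from hx]⟩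
    · rintro y ⟨z, hz, rfl⟩
      obtain ⟨w, hw, rfl⟩ := hz
      simp only [real_inner_smul_left]
      exact mul_le_mul_of_nonneg_left (hg.2 ⟨w, hw, rfl⟩) hc
  rw [supp, this.csSup_eq]

lemma supp_add (hK : IsCompact K) (hKne : K.Nonempty) (hL : IsCompact L) (hLne : L.Nonempty)
    (u : EuclideanSpace ℝ (Fin n)) : supp (K + L) u = supp K u + supp L u := by
  have hgK := supp_isGreatest hK hKne u
  have hgL := supp_isGreatest hL hLne u
  have : IsGreatest ((fun x => ⟪x, u⟫) '' (K + L)) (supp K u + supp L u) := by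
    constructor
    · obtain ⟨x, hx, hx'⟩ := hgK.1
      obtain ⟨y, hy, hy'⟩ := hgL.1
      exact ⟨x + y, Set.add_mem_add hx hy, by simp only [inner_add_left]; rw [show inner ℝ x u = supp K u from hx', show inner ℝ y u = supp L u from hy']⟩
    · rintro z ⟨w, hw, rfl⟩
      rw [Set.mem_add] at hw
      obtain ⟨x, hx, y, hy, rfl⟩ := hw
      simp only [inner_add_left]
      exact add_le_add (hgK.2 ⟨x, hx, rfl⟩) (hgL.2 ⟨y, hy, rfl⟩)
  rw [supp, this.csSup_eq]

lemma supp_mono (hL : IsCompact L) (hne : K.Nonempty) (h : K ⊆ L)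
    (u : EuclideanSpace ℝ (Fin n)) : supp K u ≤ supp L u :=
  supp_le hne fun x hx => inner_le_supp hL (hne.mono h) (h hx) u

/-- If the support function of K is at most that of M on the sphere, K ⊆ M. -/
lemma subset_of_supp_le (hKc : IsCompact K) (hKne : K.Nonempty)
    (hMc : IsClosed M) (hMconv : Convex ℝ M) (hMne : M.Nonempty)
    (h : ∀ u : EuclideanSpace ℝ (Fin n), ‖u‖ = 1 → supp K u ≤ supp M u) : K ⊆ M := by
  intro x hx
  by_contra hxM
  obtain ⟨f, c, hfM, hfx⟩ := geometric_hahn_banach_closed_point hMconv hMc hxM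
  set v := (InnerProductSpace.toDual ℝ (EuclideanSpace ℝ (Fin n))).symm f with hv
  have hfv : ∀ y, ⟪y, v⟫ = f y := by
    intro y
    rw [real_inner_comm]
    exact InnerProductSpace.toDual_symm_apply
  have hvne : v ≠ 0 := by
    intro h0
    obtain ⟨m, hm⟩ := hMne
    have h1 : f m < c := hfM m hm
    have h2 : f x = 0 := by rw [← hfv x, h0, inner_zero_right]
    have h3 : f m = 0 := by rw [← hfv m, h0, inner_zero_right]
    linarith
  set w := ‖v‖⁻¹ • v with hw
  have hnv : (0:ℝ) < ‖v‖ := norm_pos_iff.mpr hvne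
  have hwn : ‖w‖ = 1 := by
    rw [hw, norm_smul, norm_inv, norm_norm, inv_mul_cancel₀ (ne_of_gt hnv)]
  have hsuppM : supp M w ≤ ‖v‖⁻¹ * c := by
    apply supp_le hMne
    intro y hy
    rw [hw, real_inner_smul_right, hfv]
    exact mul_le_mul_of_nonneg_left (le_of_lt (hfM y hy)) (by positivity)
  have hsuppK : ‖v‖⁻¹ * c < supp K w := by
    calc ‖v‖⁻¹ * c < ‖v‖⁻¹ * f x := by
          apply mul_lt_mul_of_pos_left hfx (by positivity)
      _ = ⟪x, w⟫ := by rw [hw, real_inner_smul_right, hfv]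
      _ ≤ supp K w := inner_le_supp hKc hKne hx w
  exact absurd (h w hwn) (not_le.mpr (lt_of_le_of_lt hsuppM (lt_of_lt_of_le hsuppK (le_refl _))))

lemma eq_of_supp_eq (hKc : IsCompact K) (hKconv : Convex ℝ K) (hKne : K.Nonempty)
    (hMc : IsCompact M) (hMconv : Convex ℝ M) (hMne : M.Nonempty)
    (h : ∀ u : EuclideanSpace ℝ (Fin n), ‖u‖ = 1 → supp K u = supp M u) : K = M :=
  Set.Subset.antisymm
    (subset_of_supp_le hKc hKne hMc.isClosed hMconv hMne fun u hu => le_of_eq (h u hu))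
    (subset_of_supp_le hMc hMne hKc.isClosed hKconv hKne fun u hu => le_of_eq (h u hu).symm)

lemma supp_pos (hKc : IsCompact K) (h0 : (0:EuclideanSpace ℝ (Fin n)) ∈ interior K)
    {u : EuclideanSpace ℝ (Fin n)} (hu : ‖u‖ = 1) : 0 < supp K u := by
  obtain ⟨ε, hε, hball⟩ := Metric.isOpen_iff.mp isOpen_interior 0 h0
  have hx : (ε/2) • u ∈ K := by
    apply interior_subset
    apply hball
    rw [Metric.mem_ball, dist_zero_right, norm_smul, hu, mul_one, Real.norm_eq_abs,
      abs_of_pos (by linarith)]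
    linarith
  have := inner_le_supp hKc ⟨_, hx⟩ hx u
  rw [real_inner_smul_left, real_inner_self_eq_norm_sq, hu] at this
  nlinarith

lemma bodyO_smul (hK : IsConvexBodyO K) {c : ℝ} (hc : 0 < c) : IsConvexBodyO (c • K) := by
  obtain ⟨h1, h2, h3⟩ := hK
  refine ⟨h1.smul c, h2.smul c, ?_⟩
  rw [interior_smul₀ (ne_of_gt hc)]
  exact ⟨0, h3, smul_zero c⟩

lemma bodyO_add (hK : IsConvexBodyO K) (hL : IsConvexBodyO L) : IsConvexBodyO (K + L) := by
  obtain ⟨h1, h2, h3⟩ := hK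
  obtain ⟨h1', h2', h3'⟩ := hL
  refine ⟨h1.add h1', h2.add h2', ?_⟩
  have hopen : IsOpen (interior K + L) := IsOpen.add_right isOpen_interior
  have hsub : interior K + L ⊆ K + L := Set.add_subset_add_right interior_subset
  have : (0 : EuclideanSpace ℝ (Fin n)) ∈ interior K + L := by
    rw [show (0 : EuclideanSpace ℝ (Fin n)) = 0 + 0 by simp]
    exact Set.add_mem_add h3 (interior_subset h3')
  exact interior_maximal hsub hopen this

/-- Strict two-term weighted AM-GM. -/
lemma amgm2_strict {w x y : ℝ} (hw : w ∈ Set.Ioo (0:ℝ) 1) (hx : 0 < x) (hy : 0 < y)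
    (hne : x ≠ y) : x ^ w * y ^ (1 - w) < w * x + (1 - w) * y := by
  obtain ⟨hw0, hw1⟩ := hw
  have hkey := strictConcaveOn_log_Ioi.2 (Set.mem_Ioi.mpr hx) (Set.mem_Ioi.mpr hy) hne
    hw0 (by linarith : (0:ℝ) < 1 - w) (by ring)
  simp only [smul_eq_mul] at hkey
  have hpos : 0 < w * x + (1 - w) * y := by
    have := mul_pos hw0 hx
    have := mul_pos (by linarith : (0:ℝ) < 1 - w) hy
    linarith
  have hlt := Real.exp_lt_exp.mpr hkey
  rw [Real.exp_add, Real.exp_log hpos] at hlt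
  rw [Real.rpow_def_of_pos hx, Real.rpow_def_of_pos hy, mul_comm (Real.log x) w,
    mul_comm (Real.log y) (1 - w)]
  exact hlt

/-- Weak two-term weighted AM-GM. -/
lemma amgm2 {w x y : ℝ} (hw : w ∈ Set.Ioo (0:ℝ) 1) (hx : 0 < x) (hy : 0 < y) :
    x ^ w * y ^ (1 - w) ≤ w * x + (1 - w) * y := by
  rcases eq_or_ne x y with rfl | hne
  · rw [← Real.rpow_add hx, show w + (1 - w) = 1 by ring, Real.rpow_one]
    ring_nf; exact le_refl _
  · exact le_of_lt (amgm2_strict hw hx hy hne)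

/-- Two-term Hölder inequality with equality condition. -/
lemma holder2 {p a b al lam : ℝ} (hp : 1 < p) (hal : al ∈ Set.Ioo (0:ℝ) 1)
    (hlam : lam ∈ Set.Ioo (0:ℝ) 1) (ha : 0 < a) (hb : 0 < b) :
    (1-lam)^(1-1/p) * (1-al)^(1/p) * a + lam^(1-1/p) * al^(1/p) * b
      ≤ ((1-al)*a^p + al*b^p)^(1/p) ∧
    ((1-lam)^(1-1/p) * (1-al)^(1/p) * a + lam^(1-1/p) * al^(1/p) * b
      = ((1-al)*a^p + al*b^p)^(1/p) →
      (1-lam) * ((1-al)*a^p + al*b^p) = (1-al)*a^p) := by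
  obtain ⟨hal0, hal1⟩ := hal
  obtain ⟨hlam0, hlam1⟩ := hlam
  have hp0 : (0:ℝ) < p := by linarith
  have hp0' : p ≠ 0 := ne_of_gt hp0
  have hip : (0:ℝ) < 1/p := by positivity
  have hip1 : 1/p < 1 := by rw [div_lt_one hp0]; linarith
  have he : (1 - 1/p) ∈ Set.Ioo (0:ℝ) 1 := ⟨by linarith, by linarith⟩
  set v1 := (1-al)*a^p with hv1def
  set v2 := al*b^p with hv2def
  have hap : 0 < a^p := Real.rpow_pos_of_pos ha p
  have hbp : 0 < b^p := Real.rpow_pos_of_pos hb p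
  have hv1 : 0 < v1 := mul_pos (by linarith) hap
  have hv2 : 0 < v2 := mul_pos hal0 hbp
  set Sp := v1 + v2 with hSpdef
  have hSp : 0 < Sp := by positivity
  set S := Sp ^ (1/p) with hSdef
  have hS : 0 < S := Real.rpow_pos_of_pos hSp _
  -- rewrite terms
  have hpow_a : (a^p)^(1/p) = a := by
    rw [← Real.rpow_mul ha.le, mul_one_div_cancel hp0', Real.rpow_one]
  have hpow_b : (b^p)^(1/p) = b := by
    rw [← Real.rpow_mul hb.le, mul_one_div_cancel hp0', Real.rpow_one]
  have hv1pow : v1^(1/p) = (1-al)^(1/p) * a := by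
    rw [hv1def, Real.mul_rpow (by linarith) hap.le, hpow_a]
  have hv2pow : v2^(1/p) = al^(1/p) * b := by
    rw [hv2def, Real.mul_rpow hal0.le hbp.le, hpow_b]
  have hratio1 : (v1/Sp)^(1/p) = v1^(1/p) / S := by
    rw [Real.div_rpow hv1.le hSp.le]
  have hratio2 : (v2/Sp)^(1/p) = v2^(1/p) / S := by
    rw [Real.div_rpow hv2.le hSp.le]
  have hterm1 : (1-lam)^(1-1/p) * (1-al)^(1/p) * a
      = S * ((1-lam)^(1-1/p) * (v1/Sp)^(1/p)) := by
    rw [hratio1, hv1pow]; field_simp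
  have hterm2 : lam^(1-1/p) * al^(1/p) * b
      = S * (lam^(1-1/p) * (v2/Sp)^(1/p)) := by
    rw [hratio2, hv2pow]; field_simp
  have hy1 : 0 < v1/Sp := by positivity
  have hy2 : 0 < v2/Sp := by positivity
  have hone : (1 - (1 - 1/p)) = 1/p := by ring
  have h1 : (1-lam)^(1-1/p) * (v1/Sp)^(1/p)
      ≤ (1-1/p)*(1-lam) + (1/p)*(v1/Sp) := by
    have := amgm2 he (by linarith : (0:ℝ) < 1-lam) hy1
    rwa [hone] at this
  have h2 : lam^(1-1/p) * (v2/Sp)^(1/p)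
      ≤ (1-1/p)*lam + (1/p)*(v2/Sp) := by
    have := amgm2 he hlam0 hy2
    rwa [hone] at this
  have hsum : ((1-1/p)*(1-lam) + (1/p)*(v1/Sp)) + ((1-1/p)*lam + (1/p)*(v2/Sp)) = 1 := by
    rw [hSpdef]
    field_simp
    ring
  constructor
  · calc (1-lam)^(1-1/p) * (1-al)^(1/p) * a + lam^(1-1/p) * al^(1/p) * b
        = S * ((1-lam)^(1-1/p) * (v1/Sp)^(1/p)) + S * (lam^(1-1/p) * (v2/Sp)^(1/p)) := by
          rw [hterm1, hterm2]
      _ ≤ S * (((1-1/p)*(1-lam) + (1/p)*(v1/Sp)) + ((1-1/p)*lam + (1/p)*(v2/Sp))) := by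
          rw [mul_add]
          exact add_le_add (mul_le_mul_of_nonneg_left h1 hS.le)
            (mul_le_mul_of_nonneg_left h2 hS.le)
      _ = S := by rw [hsum, mul_one]
  · intro heq
    by_contra hne
    have hne' : (1-lam) ≠ v1/Sp := by
      intro h
      apply hne
      rw [h]
      field_simp
    have h1s : (1-lam)^(1-1/p) * (v1/Sp)^(1/p)
        < (1-1/p)*(1-lam) + (1/p)*(v1/Sp) := by
      have := amgm2_strict he (by linarith : (0:ℝ) < 1-lam) hy1 hne'
      rwa [hone] at this
    have hlt : (1-lam)^(1-1/p) * (1-al)^(1/p) * a + lam^(1-1/p) * al^(1/p) * b < S := by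
      calc (1-lam)^(1-1/p) * (1-al)^(1/p) * a + lam^(1-1/p) * al^(1/p) * b
          = S * ((1-lam)^(1-1/p) * (v1/Sp)^(1/p)) + S * (lam^(1-1/p) * (v2/Sp)^(1/p)) := by
            rw [hterm1, hterm2]
        _ < S * (((1-1/p)*(1-lam) + (1/p)*(v1/Sp)) + ((1-1/p)*lam + (1/p)*(v2/Sp))) := by
            rw [mul_add]
            exact add_lt_add_of_lt_of_le (mul_lt_mul_of_pos_left h1s hS)
              (mul_le_mul_of_nonneg_left h2 hS.le)
        _ = S := by rw [hsum, mul_one]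
    rw [heq] at hlt
    exact lt_irrefl _ hlt

lemma rpow_pow_inv {x p : ℝ} (hx : 0 ≤ x) (hp : p ≠ 0) : (x^p)^(1/p) = x := by
  rw [← Real.rpow_mul hx, mul_one_div_cancel hp, Real.rpow_one]

lemma rpow_left_inj_pos {x y p : ℝ} (hx : 0 < x) (hy : 0 < y) (hp : 0 < p)
    (h : x^p = y^p) : x = y := by
  rcases lt_trichotomy x y with hlt | heq | hgt
  · exact absurd h (ne_of_lt (Real.rpow_lt_rpow hx.le hlt hp))
  · exact heq
  · exact absurd h.symm (ne_of_lt (Real.rpow_lt_rpow hy.le hgt hp))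


/-- Equality part of Theorem 1.1/3.1.
If `F` is nonnegative, positively homogeneous, increasing and concave on convex bodies,
and moreover strictly increasing on convex bodies with the origin in their interiors,
`1 < p < ∞`, `K, L ∈ 𝒦ⁿₒ`, `α ∈ (0,1)`, and `M = (1-α)·_p K +_p α·_p L`, then
`F(M)^p = (1-α) F(K)^p + α F(L)^p` holds if and only if `K` and `L` are dilates. -/
theorem lp_transference_equality {n : ℕ} (hn : 1 ≤ n)
    (F : Set (EuclideanSpace ℝ (Fin n)) → ℝ)
    (hF0 : ∀ K, IsConvexBody K → 0 ≤ F K)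
    (hFhom : ∀ c : ℝ, 0 < c → ∀ K, IsConvexBody K → F (c • K) = c * F K)
    (hFmono : ∀ K L, IsConvexBody K → IsConvexBody L → K ⊆ L → F K ≤ F L)
    (hFconc : ∀ K L, IsConvexBody K → IsConvexBody L → ∀ α : ℝ, α ∈ Set.Ioo (0:ℝ) 1 →
      (1 - α) * F K + α * F L ≤ F ((1 - α) • K + α • L))
    (hFstrict : ∀ K L, IsConvexBodyO K → IsConvexBodyO L → K ⊂ L → F K < F L)
    (p : ℝ) (hp : 1 < p)
    (K L M : Set (EuclideanSpace ℝ (Fin n)))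
    (hK : IsConvexBodyO K) (hL : IsConvexBodyO L) (hM : IsConvexBodyO M)
    (α : ℝ) (hα : α ∈ Set.Ioo (0:ℝ) 1)
    (hMsupp : ∀ u : EuclideanSpace ℝ (Fin n), ‖u‖ = 1 →
      supp M u ^ p = (1 - α) * supp K u ^ p + α * supp L u ^ p) :
    F M ^ p = (1 - α) * F K ^ p + α * F L ^ p ↔ ∃ c : ℝ, 0 < c ∧ K = c • L := by
  obtain ⟨hα0, hα1⟩ := hα
  have hp0 : (0:ℝ) < p := by linarith
  have hp0' : p ≠ 0 := ne_of_gt hp0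
  have toBody : ∀ J : Set (EuclideanSpace ℝ (Fin n)), IsConvexBodyO J → IsConvexBody J :=
    fun J h => ⟨h.1, h.2.1, ⟨0, h.2.2⟩⟩
  have hKne : K.Nonempty := ⟨0, interior_subset hK.2.2⟩
  have hLne : L.Nonempty := ⟨0, interior_subset hL.2.2⟩
  have hMne : M.Nonempty := ⟨0, interior_subset hM.2.2⟩
  -- a unit vector exists
  set u₀ : EuclideanSpace ℝ (Fin n) := EuclideanSpace.single (⟨0, hn⟩ : Fin n) (1:ℝ) with hu₀def
  have hu₀ : ‖u₀‖ = 1 := by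
    rw [hu₀def, EuclideanSpace.norm_single, norm_one]
  -- F is positive on bodies with 0 in the interior
  have Fpos : ∀ J : Set (EuclideanSpace ℝ (Fin n)), IsConvexBodyO J → 0 < F J := by
    intro J hJ
    have hJne : J.Nonempty := ⟨0, interior_subset hJ.2.2⟩
    have h0J : (0:EuclideanSpace ℝ (Fin n)) ∈ J := interior_subset hJ.2.2
    have hsub : (1/2 : ℝ) • J ⊆ J := by
      rintro x ⟨y, hy, rfl⟩
      have := hJ.2.1 hy h0J (by norm_num : (0:ℝ) ≤ 1/2) (by norm_num : (0:ℝ) ≤ 1/2)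
        (by norm_num)
      simpa using this
    have hne : (1/2 : ℝ) • J ≠ J := by
      intro h
      have h1 := supp_smul hJ.1 hJne (by norm_num : (0:ℝ) ≤ 1/2) u₀
      rw [h] at h1
      have h2 := supp_pos hJ.1 hJ.2.2 hu₀
      nlinarith
    have hss : (1/2 : ℝ) • J ⊂ J := HasSubset.Subset.ssubset_of_ne hsub hne
    have hstrict := hFstrict _ _ (bodyO_smul hJ (by norm_num)) hJ hss
    rw [hFhom (1/2) (by norm_num) J (toBody J hJ)] at hstrict
    linarith [hF0 J (toBody J hJ)]
  have hA : 0 < F K := Fpos K hK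
  have hB : 0 < F L := Fpos L hL
  constructor
  · -- forward direction
    intro heq
    set A := F K with hAdef
    set B := F L with hBdef
    have hAp : 0 < A^p := Real.rpow_pos_of_pos hA p
    have hBp : 0 < B^p := Real.rpow_pos_of_pos hB p
    set D : ℝ := (1-α) * A^p + α * B^p with hDdef
    have hD : 0 < D := by nlinarith
    set lam : ℝ := α * B^p / D with hlamdef
    have hlam0 : 0 < lam := by positivity
    have hlam1 : lam < 1 := by
      rw [hlamdef, div_lt_one hD, hDdef]
      nlinarith
    have hlam : lam ∈ Set.Ioo (0:ℝ) 1 := ⟨hlam0, hlam1⟩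
    have h1lam : 1 - lam = (1-α) * A^p / D := by
      rw [hlamdef, hDdef]
      field_simp
      ring
    set s : ℝ := (1-lam)^(1-1/p) * (1-α)^(1/p) with hsdef
    set t : ℝ := lam^(1-1/p) * α^(1/p) with htdef
    have hs : 0 < s := mul_pos (Real.rpow_pos_of_pos (by linarith) _)
      (Real.rpow_pos_of_pos (by linarith) _)
    have ht : 0 < t := mul_pos (Real.rpow_pos_of_pos hlam0 _)
      (Real.rpow_pos_of_pos hα0 _)
    set N : Set (EuclideanSpace ℝ (Fin n)) := s • K + t • L with hNdef
    have hNbody : IsConvexBodyO N := bodyO_add (bodyO_smul hK hs) (bodyO_smul hL ht)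
    have hNc : IsCompact N := hNbody.1
    have hNne : N.Nonempty := ⟨0, interior_subset hNbody.2.2⟩
    have hsuppN : ∀ u : EuclideanSpace ℝ (Fin n),
        supp N u = s * supp K u + t * supp L u := by
      intro u
      rw [hNdef, supp_add (hK.1.smul s) hKne.smul_set (hL.1.smul t) hLne.smul_set,
        supp_smul hK.1 hKne hs.le, supp_smul hL.1 hLne ht.le]
    have hsuppM : ∀ u : EuclideanSpace ℝ (Fin n), ‖u‖ = 1 →
        supp M u = ((1-α) * supp K u ^ p + α * supp L u ^ p)^(1/p) := by
      intro u hu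
      rw [← hMsupp u hu, rpow_pow_inv (supp_pos hM.1 hM.2.2 hu).le hp0']
    have hNsubM : N ⊆ M := by
      apply subset_of_supp_le hNc hNne hM.1.isClosed hM.2.1 hMne
      intro u hu
      have ha := supp_pos hK.1 hK.2.2 hu
      have hb := supp_pos hL.1 hL.2.2 hu
      rw [hsuppN u, hsuppM u hu, hsdef, htdef]
      exact (holder2 hp ⟨hα0, hα1⟩ hlam ha hb).1
    -- concavity lower bound for F N
    have h1lam0 : (0:ℝ) < 1 - lam := by linarith
    have hconc : s * A + t * B ≤ F N := by
      have hK' : IsConvexBodyO ((s/(1-lam)) • K) := bodyO_smul hK (div_pos hs h1lam0)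
      have hL' : IsConvexBodyO ((t/lam) • L) := bodyO_smul hL (div_pos ht hlam0)
      have h := hFconc _ _ (toBody _ hK') (toBody _ hL') lam hlam
      rw [smul_smul, smul_smul, hFhom _ (div_pos hs h1lam0) K (toBody K hK),
        hFhom _ (div_pos ht hlam0) L (toBody L hL)] at h
      have e1 : (1 - lam) * (s / (1 - lam)) = s := by
        field_simp
      have e2 : lam * (t / lam) = t := by
        field_simp
      rw [e1, e2] at h
      calc s * A + t * B = (1-lam) * (s/(1-lam) * A) + lam * (t/lam * B) := by
            rw [← mul_assoc, ← mul_assoc, e1, e2]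
        _ ≤ F (s • K + t • L) := h
        _ = F N := by rw [hNdef]
    -- the optimal choice of lam gives s A + t B = D^(1/p)
    have hsAtB : s * A + t * B = D^(1/p) := by
      have hsA : s * A = (1-lam) * D^(1/p) := by
        have h1 : ((1-lam) * D)^(1/p) = (1-α)^(1/p) * A := by
          rw [h1lam, div_mul_cancel₀ _ (ne_of_gt hD),
            Real.mul_rpow (by linarith : (0:ℝ) ≤ 1-α) hAp.le, rpow_pow_inv hA.le hp0']
        rw [hsdef, mul_assoc, ← h1, Real.mul_rpow h1lam0.le hD.le, ← mul_assoc,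
          ← Real.rpow_add h1lam0]
        norm_num
      have htB : t * B = lam * D^(1/p) := by
        have h1 : (lam * D)^(1/p) = α^(1/p) * B := by
          rw [hlamdef, div_mul_cancel₀ _ (ne_of_gt hD),
            Real.mul_rpow hα0.le hBp.le, rpow_pow_inv hB.le hp0']
        rw [htdef, mul_assoc, ← h1, Real.mul_rpow hlam0.le hD.le, ← mul_assoc,
          ← Real.rpow_add hlam0]
        norm_num
      rw [hsA, htB]
      ring
    have hFM : F M = D^(1/p) := by
      rw [← rpow_pow_inv (hF0 M (toBody M hM)) hp0', heq]
    have hDle : D^(1/p) ≤ F N := by rw [← hsAtB]; exact hconc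
    have hFNle : F N ≤ F M := hFmono N M (toBody N hNbody) (toBody M hM) hNsubM
    have hNM : N = M := by
      by_contra hne
      have hlt := hFstrict N M hNbody hM (HasSubset.Subset.ssubset_of_ne hNsubM hne)
      have hMleN : F M ≤ F N := by rw [hFM]; exact hDle
      linarith
    -- pointwise equality in Hölder
    refine ⟨A/B, div_pos hA hB, ?_⟩
    apply eq_of_supp_eq hK.1 hK.2.1 hKne (hL.1.smul (A/B)) (hL.2.1.smul (A/B))
      hLne.smul_set
    intro u hu
    have ha := supp_pos hK.1 hK.2.2 hu
    have hb := supp_pos hL.1 hL.2.2 hu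
    have hap : 0 < supp K u ^ p := Real.rpow_pos_of_pos ha p
    have hbp : 0 < supp L u ^ p := Real.rpow_pos_of_pos hb p
    have hequ : s * supp K u + t * supp L u
        = ((1-α) * supp K u ^ p + α * supp L u ^ p)^(1/p) := by
      rw [← hsuppN u, ← hsuppM u hu, hNM]
    have hcond := (holder2 hp ⟨hα0, hα1⟩ hlam ha hb).2 (by
      rw [hsdef, htdef] at hequ
      exact hequ)
    -- from hcond derive supp K u * B = supp L u * A
    set Su : ℝ := (1-α) * supp K u ^ p + α * supp L u ^ p with hSudef
    have hSu : 0 < Su := by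
      have h1 := mul_pos (show (0:ℝ) < 1-α by linarith) hap
      have h2 := mul_pos hα0 hbp
      rw [hSudef]; linarith
    have hcond2 : lam * Su = α * supp L u ^ p := by
      have h0 : Su = (1-α) * supp K u ^ p + α * supp L u ^ p := hSudef
      linarith [hcond]
    have hconda : supp K u ^ p * D = A^p * Su := by
      have h1 : (1-lam) * Su = (1-α) * supp K u ^ p := hcond
      rw [h1lam, div_mul_eq_mul_div, div_eq_iff (ne_of_gt hD)] at h1
      have h2 : (1-α) * (A^p * Su) = (1-α) * (supp K u ^ p * D) := by
        linear_combination h1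
      exact (mul_left_cancel₀ (ne_of_gt (show (0:ℝ) < 1-α by linarith)) h2).symm
    have hcondb : supp L u ^ p * D = B^p * Su := by
      have h1 : lam * Su = α * supp L u ^ p := hcond2
      rw [hlamdef, div_mul_eq_mul_div, div_eq_iff (ne_of_gt hD)] at h1
      have h2 : α * (B^p * Su) = α * (supp L u ^ p * D) := by
        linear_combination h1
      exact (mul_left_cancel₀ (ne_of_gt hα0) h2).symm
    have hppow : (supp K u * B) ^ p = (supp L u * A) ^ p := by
      rw [Real.mul_rpow ha.le hB.le, Real.mul_rpow hb.le hA.le]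
      have h2 : D * (supp K u ^ p * B^p) = D * (supp L u ^ p * A^p) := by
        linear_combination (B^p) * hconda - (A^p) * hcondb
      exact mul_left_cancel₀ (ne_of_gt hD) h2
    have haB : supp K u * B = supp L u * A :=
      rpow_left_inj_pos (mul_pos ha hB) (mul_pos hb hA) hp0 hppow
    rw [supp_smul hL.1 hLne (div_pos hA hB).le u, div_mul_eq_mul_div,
      eq_div_iff (ne_of_gt hB)]
    linarith [haB]

  · -- backward direction
    rintro ⟨c, hc, rfl⟩
    have hcL : ∀ u : EuclideanSpace ℝ (Fin n), supp (c • L) u = c * supp L u :=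
      fun u => supp_smul hL.1 hLne hc.le u
    set r : ℝ := ((1-α) * c^p + α) ^ (1/p) with hrdef
    have hcp : 0 < c^p := Real.rpow_pos_of_pos hc p
    have hrbase : 0 < (1-α) * c^p + α := by nlinarith
    have hr : 0 < r := Real.rpow_pos_of_pos hrbase _
    have hrp : r ^ p = (1-α) * c^p + α := by
      rw [hrdef, ← Real.rpow_mul hrbase.le, one_div_mul_cancel hp0', Real.rpow_one]
    -- M = r • L
    have hMeq : M = r • L := by
      apply eq_of_supp_eq hM.1 hM.2.1 hMne (hL.1.smul r) (hL.2.1.smul r)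
        (hLne.smul_set)
      intro u hu
      have hb := supp_pos hL.1 hL.2.2 hu
      have hMu := supp_pos hM.1 hM.2.2 hu
      have hpow := hMsupp u hu
      rw [hcL u] at hpow
      have hrhs : (1 - α) * (c * supp L u) ^ p + α * supp L u ^ p
          = (r * supp L u) ^ p := by
        rw [Real.mul_rpow hc.le hb.le, Real.mul_rpow hr.le hb.le, hrp]
        ring
      rw [hrhs] at hpow
      rw [supp_smul hL.1 hLne hr.le u]
      exact rpow_left_inj_pos hMu (mul_pos hr hb) hp0 hpow
    have hFM : F M = r * F L := by
      rw [hMeq, hFhom r hr L (toBody L hL)]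
    have hFK : F (c • L) = c * F L := hFhom c hc L (toBody L hL)
    rw [hFM, hFK, Real.mul_rpow hr.le hB.le, Real.mul_rpow hc.le hB.le, hrp]
    ring
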